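/- Let T>0, n≥2 an integer, τ=T/n, t_k=kτ. Let s∈W²₂[0,T] with s'(0)=0 and g∈W¹₂[0,T], and let ρ>0 satisfy ∫₀ᵀ(s²+s'²) ≤ ρ² and ∫₀ᵀ(g²+g'²) ≤ ρ². Let s_k=s(t_k) and g_k=g(t_k) for k=0,…,n. Then max(‖[s]ₙ‖²_{w²₂}, ‖[g]ₙ‖²_{w¹₂}) ≤ max(‖s‖²_{W²₂[0,T]}, ‖g‖²_{W¹₂[0,T]}) + ρ²·τ + (1/2)·∫₀^τ s''(t)² dt. -/

import Mathlib

set_option maxHeartbeats 1000000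

open MeasureTheory Filter Topology Set intervalIntegral

lemma cs_int (a b : ℝ) (hab : a ≤ b) (h : ℝ → ℝ)
    (h1 : IntervalIntegrable h volume a b)
    (h2 : IntervalIntegrable (fun t => (h t)^2) volume a b) :
    (∫ t in a..b, h t)^2 ≤ (b - a) * ∫ t in a..b, (h t)^2 := by
  rcases eq_or_lt_of_le hab with rfl|hlt
  · simp
  have hℓ0 : 0 < b - a := by linarith
  set I1 : ℝ := ∫ t in a..b, h t with hI1
  set c : ℝ := I1 / (b - a) with hc
  have key : (0:ℝ) ≤ ∫ t in a..b, (h t - c)^2 :=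
    intervalIntegral.integral_nonneg hab (fun t _ => sq_nonneg _)
  have hint2 : IntervalIntegrable (fun t => (h t)^2 - (2*c)*(h t)) volume a b :=
    h2.sub (h1.const_mul _)
  have expand : (∫ t in a..b, (h t - c)^2)
      = ((∫ t in a..b, (h t)^2) - (2*c)*I1) + c^2*(b-a) := by
    have e0 : (fun t => (h t - c)^2)
        = fun t => ((h t)^2 - (2*c)*(h t)) + c^2 := by
      funext t; ring
    rw [e0, intervalIntegral.integral_add hint2 intervalIntegrable_const,
      intervalIntegral.integral_sub h2 (h1.const_mul _),
      intervalIntegral.integral_const_mul, intervalIntegral.integral_const]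
    simp only [smul_eq_mul]; ring
  rw [expand] at key
  have hcI : c * (b - a) = I1 := by rw [hc]; field_simp
  nlinarith [key, hcI]

lemma half_sq (a b : ℝ) (hab : a ≤ b) (h : ℝ → ℝ)
    (hi : IntervalIntegrable h volume a b) :
    (∫ t in a..b, h t)^2 = 2 * ∫ t in a..b, (∫ u in a..t, h u) * h t := by
  have hIcc : IntegrableOn h (Icc a b) volume :=
    (intervalIntegrable_iff_integrableOn_Icc_of_le hab).1 hi
  have hIoc : IntegrableOn h (Ioc a b) volume := hi.1
  set ν := volume.restrict (Ioc a b) with hν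
  have hF : Integrable (fun z : ℝ × ℝ => h z.1 * h z.2) (ν.prod ν) :=
    Integrable.mul_prod hIoc hIoc
  have hA : MeasurableSet {z : ℝ × ℝ | z.2 < z.1} :=
    measurableSet_lt measurable_snd measurable_fst
  set G : ℝ × ℝ → ℝ := ({z : ℝ × ℝ | z.2 < z.1}).indicator
      (fun z : ℝ × ℝ => h z.1 * h z.2) with hG
  have hGi : Integrable G (ν.prod ν) := hF.indicator hA
  have hswap : (∫ t, ∫ u, G (t, u) ∂ν ∂ν) = ∫ u, ∫ t, G (t, u) ∂ν ∂ν := by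
    exact integral_integral_swap (by exact hGi)
  -- continuity of primitives
  have hcont1 : ContinuousOn (fun t => ∫ u in a..t, h u) (Set.uIcc a b) :=
    continuousOn_primitive_interval (by rwa [uIcc_of_le hab])
  have hcont2 : ContinuousOn (fun t => ∫ u in t..b, h u) (Set.uIcc a b) :=
    continuousOn_primitive_interval_left (by rwa [uIcc_of_le hab])
  have hJ1i : IntervalIntegrable (fun t => (∫ u in a..t, h u) * h t) volume a b :=
    hi.continuousOn_mul hcont1
  have hJ2i : IntervalIntegrable (fun t => (∫ u in t..b, h u) * h t) volume a b :=
    hi.continuousOn_mul hcont2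
  -- evaluate LHS of swap
  have lhs_eval : (∫ t, ∫ u, G (t, u) ∂ν ∂ν)
      = ∫ t in a..b, (∫ u in a..t, h u) * h t := by
    rw [intervalIntegral.integral_of_le hab]
    refine setIntegral_congr_fun measurableSet_Ioc (fun t ht => ?_)
    have e1 : (fun u => G (t, u)) = (Set.Iio t).indicator (fun u => h t * h u) := by
      funext u
      simp only [hG, Set.indicator_apply, Set.mem_setOf_eq, Set.mem_Iio]
    rw [e1, hν, setIntegral_indicator measurableSet_Iio]
    have e2 : Ioc a b ∩ Iio t = Ioo a t := by
      ext u
      simp only [Set.mem_inter_iff, Set.mem_Ioc, Set.mem_Iio, Set.mem_Ioo]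
      exact ⟨fun ⟨⟨h1, _⟩, h3⟩ => ⟨h1, h3⟩, fun ⟨h1, h3⟩ => ⟨⟨h1, h3.le.trans ht.2⟩, h3⟩⟩
    rw [e2, MeasureTheory.integral_const_mul, ← MeasureTheory.integral_Ioc_eq_integral_Ioo,
      ← intervalIntegral.integral_of_le ht.1.le, mul_comm]
  -- evaluate RHS of swap
  have rhs_eval : (∫ u, ∫ t, G (t, u) ∂ν ∂ν)
      = ∫ t in a..b, (∫ u in t..b, h u) * h t := by
    rw [intervalIntegral.integral_of_le hab]
    refine setIntegral_congr_fun measurableSet_Ioc (fun u hu => ?_)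
    have e1 : (fun t => G (t, u)) = (Set.Ioi u).indicator (fun t => h t * h u) := by
      funext t
      simp only [hG, Set.indicator_apply, Set.mem_setOf_eq, Set.mem_Ioi]
    rw [e1, hν, setIntegral_indicator measurableSet_Ioi]
    have e2 : Ioc a b ∩ Ioi u = Ioc u b := by
      ext t
      simp only [Set.mem_inter_iff, Set.mem_Ioc, Set.mem_Ioi]
      exact ⟨fun ⟨⟨_, h2⟩, h3⟩ => ⟨h3, h2⟩, fun ⟨h3, h2⟩ => ⟨⟨hu.1.trans h3, h2⟩, h3⟩⟩
    rw [e2, MeasureTheory.integral_mul_const, ← intervalIntegral.integral_of_le hu.2]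
  -- sum of the two equals square
  have hsum : (∫ t in a..b, (∫ u in a..t, h u) * h t)
      + (∫ t in a..b, (∫ u in t..b, h u) * h t) = (∫ t in a..b, h t)^2 := by
    rw [← intervalIntegral.integral_add hJ1i hJ2i]
    have hEq : Set.EqOn (fun t => (∫ u in a..t, h u) * h t + (∫ u in t..b, h u) * h t)
        (fun t => (∫ u in a..b, h u) * h t) (Set.uIcc a b) := by
      intro t ht
      rw [uIcc_of_le hab] at ht
      have hadd : (∫ u in a..t, h u) + (∫ u in t..b, h u) = ∫ u in a..b, h u :=
        intervalIntegral.integral_add_adjacent_intervals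
          (hi.mono_set (by rw [uIcc_of_le hab, uIcc_of_le ht.1]; exact Icc_subset_Icc le_rfl ht.2))
          (hi.mono_set (by rw [uIcc_of_le hab, uIcc_of_le ht.2]; exact Icc_subset_Icc ht.1 le_rfl))
      simp only [← hadd]; ring
    rw [intervalIntegral.integral_congr hEq, intervalIntegral.integral_const_mul]
    ring
  have hJeq : (∫ t in a..b, (∫ u in a..t, h u) * h t)
      = ∫ t in a..b, (∫ u in t..b, h u) * h t := by
    rw [← lhs_eval, ← rhs_eval, hswap]
  linarith [hsum, hJeq]

lemma cont_of_rep (T : ℝ) (hT : 0 ≤ T) (f f' : ℝ → ℝ)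
    (hrep : ∀ a b : ℝ, 0 ≤ a → a ≤ b → b ≤ T → f b - f a = ∫ t in a..b, f' t)
    (hfi : IntervalIntegrable f' volume 0 T) :
    ContinuousOn f (Set.Icc 0 T) := by
  have h2 : ContinuousOn (fun x => ∫ t in (0:ℝ)..x, f' t) (Set.Icc 0 T) := by
    have := continuousOn_primitive_interval
      (f := f') (a := (0:ℝ)) (b := T) (μ := volume)
      (by rw [uIcc_of_le hT]
          exact (intervalIntegrable_iff_integrableOn_Icc_of_le hT).1 hfi)
    rwa [uIcc_of_le hT] at this
  have h1 : ContinuousOn (fun x => f 0 + ∫ t in (0:ℝ)..x, f' t) (Set.Icc 0 T) :=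
    continuousOn_const.add h2
  refine h1.congr fun x hx => ?_
  have := hrep 0 x le_rfl hx.1 hx.2
  show f x = f 0 + ∫ t in (0:ℝ)..x, f' t
  linarith

lemma ftc_deriv (T : ℝ) (f f' : ℝ → ℝ)
    (hderiv : ∀ t ∈ Set.Icc (0:ℝ) T, HasDerivWithinAt f (f' t) (Set.Icc (0:ℝ) T) t)
    (hcont : ContinuousOn f' (Set.Icc 0 T))
    {a b : ℝ} (ha : 0 ≤ a) (hab : a ≤ b) (hb : b ≤ T) :
    f b - f a = ∫ t in a..b, f' t := by
  have hsub : Set.Icc a b ⊆ Set.Icc (0:ℝ) T := Set.Icc_subset_Icc ha hb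
  have hfc : ContinuousOn f (Set.Icc a b) :=
    fun x hx => ((hderiv x (hsub hx)).continuousWithinAt).mono hsub
  have hint : IntervalIntegrable f' volume a b :=
    (hcont.mono hsub).intervalIntegrable_of_Icc hab
  have key := intervalIntegral.integral_eq_sub_of_hasDeriv_right_of_le hab hfc
    (fun x hx => by
      have hx0 : x ∈ Set.Icc (0:ℝ) T := hsub (Set.Ioo_subset_Icc_self hx)
      refine (hderiv x hx0).mono_of_mem_nhdsWithin ?_
      refine Filter.mem_of_superset (Ioc_mem_nhdsGT_of_mem ⟨le_refl x, lt_of_lt_of_le hx.2 hb⟩) ?_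
      exact fun y hy => ⟨le_trans hx0.1 hy.1.le, hy.2⟩) hint
  linarith [key]

lemma sq_ftc (T : ℝ) (f f' : ℝ → ℝ)
    (hrep : ∀ a b : ℝ, 0 ≤ a → a ≤ b → b ≤ T → f b - f a = ∫ t in a..b, f' t)
    (hfi : IntervalIntegrable f' volume 0 T)
    {a b : ℝ} (ha : 0 ≤ a) (hab : a ≤ b) (hb : b ≤ T) :
    f b ^ 2 - f a ^ 2 = ∫ t in a..b, 2 * f t * f' t := by
  have hT0 : (0:ℝ) ≤ T := le_trans ha (le_trans hab hb)
  have hsub : IntervalIntegrable f' volume a b :=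
    hfi.mono_set (by rw [uIcc_of_le hT0, uIcc_of_le hab]; exact Icc_subset_Icc ha hb)
  have hkey := half_sq a b hab f' hsub
  have hfcontIcc : ContinuousOn f (Set.Icc 0 T) := cont_of_rep T hT0 f f' hrep hfi
  have hfcont : ContinuousOn f (Set.uIcc a b) := by
    rw [uIcc_of_le hab]; exact hfcontIcc.mono (Icc_subset_Icc ha hb)
  have e1 : (∫ t in a..b, (∫ u in a..t, f' u) * f' t)
      = ∫ t in a..b, (f t - f a) * f' t := by
    apply intervalIntegral.integral_congr
    intro t ht
    rw [uIcc_of_le hab] at ht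
    simp only [← hrep a t ha ht.1 (ht.2.trans hb)]
  have hmul2 : IntervalIntegrable (fun t => f t * f' t) volume a b :=
    hsub.continuousOn_mul hfcont
  have hconst : IntervalIntegrable (fun t => f a * f' t) volume a b := hsub.const_mul _
  have e2 : (∫ t in a..b, (f t - f a) * f' t)
      = (∫ t in a..b, f t * f' t) - f a * (f b - f a) := by
    have : (fun t => (f t - f a) * f' t) = fun t => f t * f' t - f a * f' t := by
      funext t; ring
    rw [this, intervalIntegral.integral_sub hmul2 hconst,
      intervalIntegral.integral_const_mul, ← hrep a b ha hab hb]
  have e3 : (∫ t in a..b, 2 * f t * f' t) = 2 * ∫ t in a..b, f t * f' t := by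
    have : (fun t => 2 * f t * f' t) = fun t => 2 * (f t * f' t) := by funext t; ring
    rw [this, intervalIntegral.integral_const_mul]
  rw [e1, e2, ← hrep a b ha hab hb] at hkey
  rw [e3]
  linear_combination hkey

lemma S0_bound (T τ : ℝ) (n : ℕ) (hτ0 : 0 < τ) (hTn : (n:ℝ) * τ = T)
    (f f' : ℝ → ℝ)
    (hfc : ContinuousOn f (Set.Icc 0 T))
    (hPint : IntervalIntegrable (fun t => (f t)^2 + (f' t)^2) volume 0 T)
    (hff' : IntervalIntegrable (fun t => 2 * f t * f' t) volume 0 T)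
    (hsq : ∀ a b : ℝ, 0 ≤ a → a ≤ b → b ≤ T →
      f b ^ 2 - f a ^ 2 = ∫ t in a..b, 2 * f t * f' t) :
    ∑ k ∈ Finset.range n, τ * (f ((k:ℝ)*τ))^2
      ≤ (∫ t in (0:ℝ)..T, (f t)^2) + τ * ∫ t in (0:ℝ)..T, ((f t)^2 + (f' t)^2) := by
  have hT0 : (0:ℝ) ≤ T := by rw [← hTn]; positivity
  have hsqint : IntervalIntegrable (fun t => (f t)^2) volume 0 T :=
    ((hfc.pow 2).mono (by rw [uIcc_of_le hT0])).intervalIntegrable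
  have msub : ∀ {F : ℝ → ℝ}, IntervalIntegrable F volume 0 T →
      ∀ a b : ℝ, 0 ≤ a → a ≤ b → b ≤ T → IntervalIntegrable F volume a b :=
    fun hF a b ha hab hb => hF.mono_set
      (by rw [uIcc_of_le hT0, uIcc_of_le hab]; exact Icc_subset_Icc ha hb)
  set a : ℕ → ℝ := fun k => (k:ℝ)*τ with ha_def
  have hbounds : ∀ k : ℕ, k < n → 0 ≤ a k ∧ a k ≤ a (k+1) ∧ a (k+1) ≤ T := by
    intro k hk
    have h1 : (0:ℝ) ≤ (k:ℝ)*τ := by positivity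
    have h2 : ((k:ℝ)+1) ≤ (n:ℝ) := by exact_mod_cast hk
    refine ⟨h1, ?_, ?_⟩
    · simp only [ha_def]; push_cast; nlinarith
    · simp only [ha_def]; push_cast; rw [← hTn]; nlinarith
  have key : ∀ k : ℕ, k < n → τ * (f (a k))^2
      ≤ (∫ t in (a k)..(a (k+1)), (f t)^2)
        + τ * ∫ t in (a k)..(a (k+1)), ((f t)^2 + (f' t)^2) := by
    intro k hk
    obtain ⟨hA0, hAB, hBT⟩ := hbounds k hk
    have hBA : a (k+1) - a k = τ := by simp only [ha_def]; push_cast; ring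
    set C : ℝ := ∫ t in (a k)..(a (k+1)), ((f t)^2 + (f' t)^2) with hC
    have hPab := msub hPint (a k) (a (k+1)) hA0 hAB hBT
    have hptwise : ∀ t ∈ Set.Icc (a k) (a (k+1)), (f (a k))^2 ≤ (f t)^2 + C := by
      intro t ht
      have htT : t ≤ T := le_trans ht.2 hBT
      have h1 := hsq (a k) t hA0 ht.1 htT
      have h2 : |∫ u in (a k)..t, 2 * f u * f' u| ≤ ∫ u in (a k)..t, |2 * f u * f' u| :=
        intervalIntegral.abs_integral_le_integral_abs ht.1
      have habs : IntervalIntegrable (fun u => |2 * f u * f' u|) volume (a k) t :=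
        (msub hff' (a k) t hA0 ht.1 htT).abs
      have h3 : (∫ u in (a k)..t, |2 * f u * f' u|)
          ≤ ∫ u in (a k)..t, ((f u)^2 + (f' u)^2) := by
        refine intervalIntegral.integral_mono_on ht.1 habs
          (msub hPint (a k) t hA0 ht.1 htT) (fun u _ => ?_)
        refine abs_le.2 ⟨by nlinarith [sq_nonneg (f u + f' u)],
          by nlinarith [sq_nonneg (f u - f' u)]⟩
      have h4 : (∫ u in (a k)..t, ((f u)^2 + (f' u)^2)) ≤ C := by
        refine intervalIntegral.integral_mono_interval le_rfl ht.1 ht.2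
          (Filter.Eventually.of_forall (fun u => by positivity)) hPab
      have h5 : |∫ u in (a k)..t, 2 * f u * f' u| ≤ C := le_trans h2 (le_trans h3 h4)
      have h6 := abs_le.1 h5
      nlinarith [h1, h6.1, h6.2]
    have hconst : τ * (f (a k))^2 = ∫ _ in (a k)..(a (k+1)), (f (a k))^2 := by
      rw [intervalIntegral.integral_const, smul_eq_mul, hBA]
    have hfsqab := msub hsqint (a k) (a (k+1)) hA0 hAB hBT
    have hmono : (∫ _ in (a k)..(a (k+1)), (f (a k))^2)
        ≤ ∫ t in (a k)..(a (k+1)), ((f t)^2 + C) :=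
      intervalIntegral.integral_mono_on hAB intervalIntegrable_const
        (hfsqab.add intervalIntegrable_const) hptwise
    have hsplit : (∫ t in (a k)..(a (k+1)), ((f t)^2 + C))
        = (∫ t in (a k)..(a (k+1)), (f t)^2) + τ * C := by
      rw [intervalIntegral.integral_add hfsqab intervalIntegrable_const,
        intervalIntegral.integral_const, smul_eq_mul, hBA]
    linarith [hconst, hmono, hsplit]
  have hsum1 : ∑ k ∈ Finset.range n, (∫ t in (a k)..(a (k+1)), (f t)^2)
      = ∫ t in (0:ℝ)..T, (f t)^2 := by
    have := intervalIntegral.sum_integral_adjacent_intervals (μ := volume) (a := a)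
      (f := fun t => (f t)^2) (n := n)
      (fun k hk => by obtain ⟨h1, h2, h3⟩ := hbounds k hk; exact msub hsqint _ _ h1 h2 h3)
    rw [this]
    have e0 : a 0 = 0 := by simp [ha_def]
    have en : a n = T := by simp only [ha_def]; exact hTn
    rw [e0, en]
  have hsum2 : ∑ k ∈ Finset.range n, (∫ t in (a k)..(a (k+1)), ((f t)^2 + (f' t)^2))
      = ∫ t in (0:ℝ)..T, ((f t)^2 + (f' t)^2) := by
    have := intervalIntegral.sum_integral_adjacent_intervals (μ := volume) (a := a)
      (f := fun t => (f t)^2 + (f' t)^2) (n := n)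
      (fun k hk => by obtain ⟨h1, h2, h3⟩ := hbounds k hk; exact msub hPint _ _ h1 h2 h3)
    rw [this]
    have e0 : a 0 = 0 := by simp [ha_def]
    have en : a n = T := by simp only [ha_def]; exact hTn
    rw [e0, en]
  calc ∑ k ∈ Finset.range n, τ * (f ((k:ℝ)*τ))^2
      ≤ ∑ k ∈ Finset.range n, ((∫ t in (a k)..(a (k+1)), (f t)^2)
          + τ * ∫ t in (a k)..(a (k+1)), ((f t)^2 + (f' t)^2)) :=
        Finset.sum_le_sum (fun k hk => key k (Finset.mem_range.1 hk))
    _ = (∑ k ∈ Finset.range n, ∫ t in (a k)..(a (k+1)), (f t)^2)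
        + τ * ∑ k ∈ Finset.range n, ∫ t in (a k)..(a (k+1)), ((f t)^2 + (f' t)^2) := by
        rw [Finset.sum_add_distrib, Finset.mul_sum]
    _ = (∫ t in (0:ℝ)..T, (f t)^2) + τ * ∫ t in (0:ℝ)..T, ((f t)^2 + (f' t)^2) := by
        rw [hsum1, hsum2]

lemma S1_bound (T τ : ℝ) (n : ℕ) (hτ0 : 0 < τ) (hTn : (n:ℝ) * τ = T)
    (f f' : ℝ → ℝ)
    (hrep : ∀ a b : ℝ, 0 ≤ a → a ≤ b → b ≤ T → f b - f a = ∫ t in a..b, f' t)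
    (hf'i : IntervalIntegrable f' volume 0 T)
    (hf'sq : IntervalIntegrable (fun t => (f' t)^2) volume 0 T) :
    ∑ k ∈ Finset.Icc 1 n, τ * ((f ((k:ℝ)*τ) - f (((k:ℝ)-1)*τ))/τ)^2
      ≤ ∫ t in (0:ℝ)..T, (f' t)^2 := by
  have hT0 : (0:ℝ) ≤ T := by rw [← hTn]; positivity
  have msub : ∀ {F : ℝ → ℝ}, IntervalIntegrable F volume 0 T →
      ∀ a b : ℝ, 0 ≤ a → a ≤ b → b ≤ T → IntervalIntegrable F volume a b :=
    fun hF a b ha hab hb => hF.mono_set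
      (by rw [uIcc_of_le hT0, uIcc_of_le hab]; exact Icc_subset_Icc ha hb)
  set a : ℕ → ℝ := fun k => (k:ℝ)*τ with ha_def
  have hbounds : ∀ k : ℕ, k < n → 0 ≤ a k ∧ a k ≤ a (k+1) ∧ a (k+1) ≤ T := by
    intro k hk
    have h1 : (0:ℝ) ≤ (k:ℝ)*τ := by positivity
    have h2 : ((k:ℝ)+1) ≤ (n:ℝ) := by exact_mod_cast hk
    refine ⟨h1, ?_, ?_⟩
    · simp only [ha_def]; push_cast; nlinarith
    · simp only [ha_def]; push_cast; rw [← hTn]; nlinarith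
  rw [← Finset.Ico_add_one_right_eq_Icc, Finset.sum_Ico_eq_sum_range]
  simp only [Nat.add_sub_cancel]
  have hstep : ∀ j ∈ Finset.range n,
      τ * ((f (((1+j : ℕ):ℝ)*τ) - f ((((1+j : ℕ):ℝ)-1)*τ))/τ)^2
      ≤ ∫ t in (a j)..(a (j+1)), (f' t)^2 := by
    intro j hj
    have hjn := Finset.mem_range.1 hj
    obtain ⟨h1, h2, h3⟩ := hbounds j hjn
    have e1 : ((1+j : ℕ):ℝ)*τ = a (j+1) := by simp only [ha_def]; push_cast; ring
    have e2 : (((1+j : ℕ):ℝ)-1)*τ = a j := by simp only [ha_def]; push_cast; ring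
    rw [e1, e2]
    have hΔ : f (a (j+1)) - f (a j) = ∫ t in (a j)..(a (j+1)), f' t :=
      hrep _ _ h1 h2 h3
    have hcs := cs_int (a j) (a (j+1)) h2 f' (msub hf'i _ _ h1 h2 h3)
      (msub hf'sq _ _ h1 h2 h3)
    have hBA : a (j+1) - a j = τ := by simp only [ha_def]; push_cast; ring
    rw [hBA] at hcs
    rw [← hΔ] at hcs
    have : τ * ((f (a (j+1)) - f (a j))/τ)^2
        = (f (a (j+1)) - f (a j))^2 / τ := by field_simp
    rw [this]
    rw [div_le_iff₀ hτ0] at *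
    nlinarith [hcs]
  calc (∑ j ∈ Finset.range n,
        τ * ((f (((1+j : ℕ):ℝ)*τ) - f ((((1+j : ℕ):ℝ)-1)*τ))/τ)^2)
      ≤ ∑ j ∈ Finset.range n, ∫ t in (a j)..(a (j+1)), (f' t)^2 :=
        Finset.sum_le_sum hstep
    _ = ∫ t in (0:ℝ)..T, (f' t)^2 := by
        have := intervalIntegral.sum_integral_adjacent_intervals (μ := volume) (a := a)
          (f := fun t => (f' t)^2) (n := n)
          (fun k hk => by obtain ⟨h1, h2, h3⟩ := hbounds k hk; exact msub hf'sq _ _ h1 h2 h3)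
        rw [this]
        have e0 : a 0 = 0 := by simp [ha_def]
        have en : a n = T := by simp only [ha_def]; exact hTn
        rw [e0, en]

lemma shift_bound (τ L : ℝ) (hτ0 : 0 < τ) (hτL : τ ≤ L) (Ψ : ℝ → ℝ)
    (hcont : ContinuousOn Ψ (Set.Icc 0 (L+τ)))
    (hmono : ∀ x y : ℝ, 0 ≤ x → x ≤ y → y ≤ L+τ → Ψ x ≤ Ψ y)
    (hnn : 0 ≤ Ψ 0) :
    (∫ t in (0:ℝ)..L, (Ψ (t+τ) - Ψ t)) ≤ τ * Ψ (L+τ) := by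
  have hL0 : (0:ℝ) ≤ L := le_trans hτ0.le hτL
  have hLT : L ≤ L + τ := by linarith
  have hTot : (0:ℝ) ≤ L + τ := by linarith
  have cint : ∀ a b : ℝ, 0 ≤ a → a ≤ b → b ≤ L+τ → IntervalIntegrable Ψ volume a b := by
    intro a b ha hab hb
    exact ((hcont.mono (Set.Icc_subset_Icc ha hb)).mono
      (by rw [uIcc_of_le hab])).intervalIntegrable
  have hshiftc : ContinuousOn (fun t => Ψ (t+τ)) (Set.Icc 0 L) := by
    refine hcont.comp ((continuous_id.add continuous_const).continuousOn) ?_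
    intro x hx
    exact ⟨by simp; linarith [hx.1], by simp; linarith [hx.2]⟩
  have hshifti : IntervalIntegrable (fun t => Ψ (t+τ)) volume 0 L :=
    (hshiftc.mono (by rw [uIcc_of_le hL0])).intervalIntegrable
  have hΨ0L : IntervalIntegrable Ψ volume 0 L := cint 0 L le_rfl hL0 hLT
  have e1 : (∫ t in (0:ℝ)..L, (Ψ (t+τ) - Ψ t))
      = (∫ t in (0:ℝ)..L, Ψ (t+τ)) - ∫ t in (0:ℝ)..L, Ψ t :=
    intervalIntegral.integral_sub hshifti hΨ0L
  have e2 : (∫ t in (0:ℝ)..L, Ψ (t+τ)) = ∫ t in τ..(L+τ), Ψ t := by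
    rw [intervalIntegral.integral_comp_add_right]
    norm_num
  have e3 : (∫ t in τ..(L+τ), Ψ t) = (∫ t in τ..L, Ψ t) + ∫ t in L..(L+τ), Ψ t :=
    (intervalIntegral.integral_add_adjacent_intervals
      (cint τ L hτ0.le hτL hLT) (cint L (L+τ) hL0 hLT le_rfl)).symm
  have e4 : (∫ t in (0:ℝ)..L, Ψ t) = (∫ t in (0:ℝ)..τ, Ψ t) + ∫ t in τ..L, Ψ t :=
    (intervalIntegral.integral_add_adjacent_intervals
      (cint 0 τ le_rfl hτ0.le (by linarith)) (cint τ L hτ0.le hτL hLT)).symm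
  have h5 : (∫ t in L..(L+τ), Ψ t) ≤ τ * Ψ (L+τ) := by
    have := intervalIntegral.integral_mono_on hLT (cint L (L+τ) hL0 hLT le_rfl)
      intervalIntegrable_const
      (fun x hx => hmono x (L+τ) (le_trans hL0 hx.1) hx.2 le_rfl)
    rwa [intervalIntegral.integral_const, smul_eq_mul, add_sub_cancel_left] at this
  have h6 : 0 ≤ ∫ t in (0:ℝ)..τ, Ψ t :=
    intervalIntegral.integral_nonneg hτ0.le
      (fun u hu => le_trans hnn (hmono 0 u le_rfl hu.1 (by linarith [hu.2])))
  rw [e1, e2, e3, e4]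
  linarith

/-- inequality (2.13), bounding the discrete norms of the sampled control
vector by the continuous norms plus `ρ²τ + (1/2)∫₀^τ s''²`. -/
theorem stmt_5 (T : ℝ) (hT : 0 < T) (n : ℕ) (hn : 2 ≤ n) (τ : ℝ) (hτ : τ = T / n)
    (s s' s'' g g' : ℝ → ℝ) (ρ : ℝ) (hρ : 0 < ρ)
    (hs : ∀ t ∈ Set.Icc (0:ℝ) T, HasDerivWithinAt s (s' t) (Set.Icc (0:ℝ) T) t)
    (hs''int : IntervalIntegrable s'' volume 0 T)
    (hs''sq : IntervalIntegrable (fun t => (s'' t)^2) volume 0 T)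
    (hftcs : ∀ a b : ℝ, 0 ≤ a → a ≤ b → b ≤ T → s' b - s' a = ∫ t in a..b, s'' t)
    (hs'0 : s' 0 = 0)
    (hg'int : IntervalIntegrable g' volume 0 T)
    (hg'sq : IntervalIntegrable (fun t => (g' t)^2) volume 0 T)
    (hftcg : ∀ a b : ℝ, 0 ≤ a → a ≤ b → b ≤ T → g b - g a = ∫ t in a..b, g' t)
    (hsρ : (∫ t in (0:ℝ)..T, ((s t)^2 + (s' t)^2)) ≤ ρ^2)
    (hgρ : (∫ t in (0:ℝ)..T, ((g t)^2 + (g' t)^2)) ≤ ρ^2) :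
    max
      (∑ k ∈ Finset.range n, τ * (s ((k:ℝ)*τ))^2
        + ∑ k ∈ Finset.Icc 1 n, τ * ((s ((k:ℝ)*τ) - s (((k:ℝ)-1)*τ))/τ)^2
        + (τ * ((s τ - s 0)/τ^2)^2
            + ∑ k ∈ Finset.Icc 1 (n-1),
                τ * ((s (((k:ℝ)+1)*τ) - 2*s ((k:ℝ)*τ) + s (((k:ℝ)-1)*τ))/τ^2)^2))
      (∑ k ∈ Finset.range n, τ * (g ((k:ℝ)*τ))^2
        + ∑ k ∈ Finset.Icc 1 n, τ * ((g ((k:ℝ)*τ) - g (((k:ℝ)-1)*τ))/τ)^2)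
    ≤ max (∫ t in (0:ℝ)..T, ((s t)^2 + (s' t)^2 + (s'' t)^2))
          (∫ t in (0:ℝ)..T, ((g t)^2 + (g' t)^2))
      + ρ^2 * τ + (1/2) * ∫ t in (0:ℝ)..τ, (s'' t)^2 := by
  -- basic facts
  have hn0 : (0:ℝ) < (n:ℝ) := by exact_mod_cast lt_of_lt_of_le (by norm_num) hn
  have hn2 : (2:ℝ) ≤ (n:ℝ) := by exact_mod_cast hn
  have hτ0 : 0 < τ := by rw [hτ]; positivity
  have hTn : (n:ℝ) * τ = T := by rw [hτ]; field_simp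
  have hT0 : (0:ℝ) ≤ T := hT.le
  have hτT : τ ≤ T := by nlinarith
  set a : ℕ → ℝ := fun k => (k:ℝ)*τ with ha_def
  -- integrability helpers
  have msub : ∀ {F : ℝ → ℝ}, IntervalIntegrable F volume 0 T →
      ∀ a b : ℝ, 0 ≤ a → a ≤ b → b ≤ T → IntervalIntegrable F volume a b :=
    fun hF a b ha hab hb => hF.mono_set
      (by rw [uIcc_of_le hT0, uIcc_of_le hab]; exact Icc_subset_Icc ha hb)
  have cint : ∀ {F : ℝ → ℝ}, ContinuousOn F (Set.Icc 0 T) →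
      IntervalIntegrable F volume 0 T :=
    fun hF => (hF.mono (by rw [uIcc_of_le hT0])).intervalIntegrable
  -- continuity
  have hscont : ContinuousOn s (Set.Icc 0 T) :=
    fun x hx => (hs x hx).continuousWithinAt
  have hs'cont : ContinuousOn s' (Set.Icc 0 T) := by
    refine cont_of_rep T hT0 s' s'' hftcs hs''int
  have hgcont : ContinuousOn g (Set.Icc 0 T) :=
    cont_of_rep T hT0 g g' hftcg hg'int
  have hs'int : IntervalIntegrable s' volume 0 T := cint hs'cont
  have hs'sq : IntervalIntegrable (fun t => (s' t)^2) volume 0 T := cint (hs'cont.pow 2)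
  have hssq : IntervalIntegrable (fun t => (s t)^2) volume 0 T := cint (hscont.pow 2)
  have hgsq : IntervalIntegrable (fun t => (g t)^2) volume 0 T := cint (hgcont.pow 2)
  have hPs : IntervalIntegrable (fun t => (s t)^2 + (s' t)^2) volume 0 T :=
    hssq.add hs'sq
  have hPg : IntervalIntegrable (fun t => (g t)^2 + (g' t)^2) volume 0 T :=
    hgsq.add hg'sq
  have hffs : IntervalIntegrable (fun t => 2 * s t * s' t) volume 0 T :=
    cint (((continuousOn_const (c := (2:ℝ))).mul hscont).mul hs'cont)
  have hffg : IntervalIntegrable (fun t => 2 * g t * g' t) volume 0 T := by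
    have := hg'int.continuousOn_mul (g := fun t => 2 * g t)
      (by rw [uIcc_of_le hT0]; exact (continuousOn_const (c := (2:ℝ))).mul hgcont)
    exact this
  -- FTC facts
  have ftcs : ∀ a b : ℝ, 0 ≤ a → a ≤ b → b ≤ T → s b - s a = ∫ t in a..b, s' t :=
    fun a b ha hab hb => ftc_deriv T s s' hs hs'cont ha hab hb
  have sqftc_s : ∀ a b : ℝ, 0 ≤ a → a ≤ b → b ≤ T →
      s b ^ 2 - s a ^ 2 = ∫ t in a..b, 2 * s t * s' t :=
    fun a b ha hab hb => sq_ftc T s s' ftcs hs'int ha hab hb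
  have sqftc_g : ∀ a b : ℝ, 0 ≤ a → a ≤ b → b ≤ T →
      g b ^ 2 - g a ^ 2 = ∫ t in a..b, 2 * g t * g' t :=
    fun a b ha hab hb => sq_ftc T g g' hftcg hg'int ha hab hb
  -- zeroth and first order bounds
  have Ss0 := S0_bound T τ n hτ0 hTn s s' hscont hPs hffs sqftc_s
  have Sg0 := S0_bound T τ n hτ0 hTn g g' hgcont hPg hffg sqftc_g
  have Ss1 := S1_bound T τ n hτ0 hTn s s' ftcs hs'int hs'sq
  have Sg1 := S1_bound T τ n hτ0 hTn g g' hftcg hg'int hg'sq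
  -- Ψ, primitive of s''^2
  set Ψ : ℝ → ℝ := fun x => ∫ t in (0:ℝ)..x, (s'' t)^2 with hΨ_def
  have hΨcont : ContinuousOn Ψ (Set.Icc 0 T) := by
    have := continuousOn_primitive_interval
      (f := fun t => (s'' t)^2) (a := (0:ℝ)) (b := T) (μ := volume)
      (by rw [uIcc_of_le hT0]
          exact (intervalIntegrable_iff_integrableOn_Icc_of_le hT0).1 hs''sq)
    rwa [uIcc_of_le hT0] at this
  have hΨadd : ∀ x y : ℝ, 0 ≤ x → x ≤ y → y ≤ T →
      Ψ y - Ψ x = ∫ t in x..y, (s'' t)^2 := by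
    intro x y hx hxy hy
    have := intervalIntegral.integral_add_adjacent_intervals
      (msub hs''sq 0 x le_rfl hx (le_trans hxy hy)) (msub hs''sq x y hx hxy hy)
    simp only [hΨ_def]
    linarith [this]
  have hΨmono : ∀ x y : ℝ, 0 ≤ x → x ≤ y → y ≤ T → Ψ x ≤ Ψ y := by
    intro x y hx hxy hy
    have h1 := hΨadd x y hx hxy hy
    have h2 : (0:ℝ) ≤ ∫ t in x..y, (s'' t)^2 :=
      intervalIntegral.integral_nonneg hxy (fun u _ => sq_nonneg _)
    linarith
  have hΨ0 : Ψ 0 = 0 := by simp [hΨ_def]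
  have hΨτnn : 0 ≤ Ψ τ := by
    have := hΨmono 0 τ le_rfl hτ0.le hτT
    linarith [hΨ0]
  -- k = 0 second-difference term
  have hterm0 : τ * ((s τ - s 0)/τ^2)^2 ≤ (1/2) * Ψ τ := by
    have hΔ : s τ - s 0 = ∫ t in (0:ℝ)..τ, s' t := ftcs 0 τ le_rfl hτ0.le hτT
    have hpt : ∀ t ∈ Set.Icc (0:ℝ) τ, (s' t)^2 ≤ t * Ψ τ := by
      intro t ht
      have htT : t ≤ T := le_trans ht.2 hτT
      have hrep : s' t = ∫ u in (0:ℝ)..t, s'' u := by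
        have := hftcs 0 t le_rfl ht.1 htT
        rw [hs'0] at this; linarith
      have hcs := cs_int 0 t ht.1 s'' (msub hs''int 0 t le_rfl ht.1 htT)
        (msub hs''sq 0 t le_rfl ht.1 htT)
      rw [← hrep] at hcs
      have hmt : Ψ t ≤ Ψ τ := hΨmono t τ ht.1 ht.2 hτT
      have : (t - 0) * (∫ u in (0:ℝ)..t, (s'' u)^2) = t * Ψ t := by
        simp [hΨ_def]
      nlinarith [hcs, hmt, ht.1]
    have h1 := cs_int 0 τ hτ0.le s' (msub hs'int 0 τ le_rfl hτ0.le hτT)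
      (msub hs'sq 0 τ le_rfl hτ0.le hτT)
    have h2 : (∫ t in (0:ℝ)..τ, (s' t)^2) ≤ ∫ t in (0:ℝ)..τ, t * Ψ τ := by
      refine intervalIntegral.integral_mono_on hτ0.le
        (msub hs'sq 0 τ le_rfl hτ0.le hτT)
        ((intervalIntegrable_id).mul_const _) hpt
    have h3 : (∫ t in (0:ℝ)..τ, t * Ψ τ) = τ^2/2 * Ψ τ := by
      rw [intervalIntegral.integral_mul_const, integral_id]
      ring
    have hΔsq : (s τ - s 0)^2 ≤ τ^3 / 2 * Ψ τ := by
      rw [hΔ]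
      nlinarith [h1, h2, h3, hτ0]
    have hτ3 : (0:ℝ) < τ^3 := by positivity
    have heq : τ * ((s τ - s 0)/τ^2)^2 = (s τ - s 0)^2 / τ^3 := by
      field_simp
    rw [heq, div_le_iff₀ hτ3]
    have hre : 1/2 * Ψ τ * τ^3 = τ^3/2 * Ψ τ := by ring
    linarith [hΔsq]
  -- interior second differences
  set L : ℝ := ((n-1 : ℕ):ℝ) * τ with hL_def
  have hLcast : ((n-1 : ℕ):ℝ) = (n:ℝ) - 1 := by
    have : (1:ℕ) ≤ n := le_trans (by norm_num) hn
    push_cast [Nat.cast_sub this]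
    ring
  have hLτ : L + τ = T := by rw [hL_def, hLcast, ← hTn]; ring
  have hτL : τ ≤ L := by rw [hL_def, hLcast]; nlinarith
  have hL0 : 0 ≤ L := le_trans hτ0.le hτL
  have hbounds2 : ∀ j : ℕ, j < n - 1 →
      0 ≤ a j ∧ a j ≤ a (j+1) ∧ a (j+1) ≤ a (j+2) ∧ a (j+2) ≤ T := by
    intro j hj
    have hj2 : ((j:ℝ)+2) ≤ (n:ℝ) := by
      have : j + 2 ≤ n := by omega
      exact_mod_cast this
    refine ⟨by positivity, ?_, ?_, ?_⟩
    · simp only [ha_def]; push_cast; nlinarith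
    · simp only [ha_def]; push_cast; nlinarith
    · simp only [ha_def]; push_cast; rw [← hTn]; nlinarith
  have hterm2 : ∀ j : ℕ, j < n - 1 →
      τ * ((s (a (j+2)) - 2*s (a (j+1)) + s (a j))/τ^2)^2
        ≤ (1/τ) * ∫ t in (a j)..(a (j+1)), (Ψ (t+τ) - Ψ t) := by
    intro j hj
    obtain ⟨h0, h1, h2, h3⟩ := hbounds2 j hj
    have ha1T : a (j+1) ≤ T := le_trans h2 h3
    have hstep : a j + τ = a (j+1) := by simp only [ha_def]; push_cast; ring
    have hstep2 : a (j+1) + τ = a (j+2) := by simp only [ha_def]; push_cast; ring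
    -- continuity of shifted s'
    have hshiftc : ContinuousOn (fun t => s' (t+τ)) (Set.Icc (a j) (a (j+1))) := by
      refine hs'cont.comp ((continuous_id.add continuous_const).continuousOn) ?_
      intro x hx
      constructor
      · simp only [id, Pi.add_apply]; have := hx.1; simp; linarith [hτ0.le]
      · simp only [id, Pi.add_apply]; have := hx.2; simp; linarith [hstep2 ▸ h3]
    have hs'sub : ContinuousOn s' (Set.Icc (a j) (a (j+1))) :=
      hs'cont.mono (Set.Icc_subset_Icc h0 ha1T)
    have hdiffc : ContinuousOn (fun t => s' (t+τ) - s' t) (Set.Icc (a j) (a (j+1))) :=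
      hshiftc.sub hs'sub
    have hdiffi : IntervalIntegrable (fun t => s' (t+τ) - s' t) volume (a j) (a (j+1)) :=
      (hdiffc.mono (by rw [uIcc_of_le h1])).intervalIntegrable
    have hdiffsqi : IntervalIntegrable (fun t => (s' (t+τ) - s' t)^2) volume (a j) (a (j+1)) :=
      ((hdiffc.pow 2).mono (by rw [uIcc_of_le h1])).intervalIntegrable
    have hshifti : IntervalIntegrable (fun t => s' (t+τ)) volume (a j) (a (j+1)) :=
      (hshiftc.mono (by rw [uIcc_of_le h1])).intervalIntegrable
    -- representation of second difference
    have hD : s (a (j+2)) - 2*s (a (j+1)) + s (a j)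
        = ∫ t in (a j)..(a (j+1)), (s' (t+τ) - s' t) := by
      rw [intervalIntegral.integral_sub hshifti
        (msub hs'int (a j) (a (j+1)) h0 h1 ha1T)]
      have e1 : (∫ t in (a j)..(a (j+1)), s' (t+τ))
          = ∫ t in (a (j+1))..(a (j+2)), s' t := by
        rw [intervalIntegral.integral_comp_add_right, hstep, hstep2]
      rw [e1, ← ftcs (a (j+1)) (a (j+2)) (le_trans h0 h1) h2 h3,
        ← ftcs (a j) (a (j+1)) h0 h1 ha1T]
      ring
    -- Cauchy-Schwarz
    have hcs := cs_int (a j) (a (j+1)) h1 (fun t => s' (t+τ) - s' t) hdiffi hdiffsqi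
    have hBA : a (j+1) - a j = τ := by simp only [ha_def]; push_cast; ring
    rw [hBA, ← hD] at hcs
    -- pointwise bound on the square
    have hpt : ∀ t ∈ Set.Icc (a j) (a (j+1)),
        (s' (t+τ) - s' t)^2 ≤ τ * (Ψ (t+τ) - Ψ t) := by
      intro t ht
      have ht0 : 0 ≤ t := le_trans h0 ht.1
      have httτ : t ≤ t + τ := by linarith
      have htτT : t + τ ≤ T := by
        linarith [ht.2, hstep2, h3]
      have hrep : s' (t+τ) - s' t = ∫ u in t..(t+τ), s'' u :=
        hftcs t (t+τ) ht0 httτ htτT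
      have hcs2 := cs_int t (t+τ) httτ s'' (msub hs''int t (t+τ) ht0 httτ htτT)
        (msub hs''sq t (t+τ) ht0 httτ htτT)
      rw [← hrep] at hcs2
      have hΨd := hΨadd t (t+τ) ht0 httτ htτT
      have : t + τ - t = τ := by ring
      rw [this] at hcs2
      linarith [hcs2, hΨd.symm ▸ hcs2]
    -- integral comparison
    have hΨdiffc : ContinuousOn (fun t => τ * (Ψ (t+τ) - Ψ t)) (Set.Icc (a j) (a (j+1))) := by
      refine continuousOn_const.mul (ContinuousOn.sub ?_ ?_)
      · refine hΨcont.comp ((continuous_id.add continuous_const).continuousOn) ?_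
        intro x hx
        constructor
        · simp; linarith [le_trans h0 hx.1, hτ0.le]
        · simp; linarith [hx.2, hstep2 ▸ h3]
      · exact hΨcont.mono (Set.Icc_subset_Icc h0 ha1T)
    have hΨdiffi : IntervalIntegrable (fun t => τ * (Ψ (t+τ) - Ψ t)) volume (a j) (a (j+1)) :=
      ((hΨdiffc).mono (by rw [uIcc_of_le h1])).intervalIntegrable
    have hmono2 : (∫ t in (a j)..(a (j+1)), (s' (t+τ) - s' t)^2)
        ≤ ∫ t in (a j)..(a (j+1)), τ * (Ψ (t+τ) - Ψ t) :=
      intervalIntegral.integral_mono_on h1 hdiffsqi hΨdiffi hpt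
    have hconstmul : (∫ t in (a j)..(a (j+1)), τ * (Ψ (t+τ) - Ψ t))
        = τ * ∫ t in (a j)..(a (j+1)), (Ψ (t+τ) - Ψ t) :=
      intervalIntegral.integral_const_mul _ _
    set D := s (a (j+2)) - 2*s (a (j+1)) + s (a j) with hD_def
    set W := ∫ t in (a j)..(a (j+1)), (Ψ (t+τ) - Ψ t) with hW_def
    have hDsq : D^2 ≤ τ^2 * W := by
      rw [hconstmul] at hmono2
      nlinarith [hcs, hmono2, hτ0]
    have hτ3 : (0:ℝ) < τ^3 := by positivity
    have heq : τ * (D/τ^2)^2 = D^2 / τ^3 := by field_simp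
    rw [heq, div_le_iff₀ hτ3]
    have : (1/τ) * W * τ^3 = τ^2 * W := by field_simp
    rw [this]
    exact hDsq
  -- sum of interior second differences
  have hΨdiffc0 : ContinuousOn (fun t => Ψ (t+τ) - Ψ t) (Set.Icc 0 L) := by
    refine ContinuousOn.sub ?_ (hΨcont.mono (Set.Icc_subset_Icc le_rfl (by linarith [hLτ, hτ0])))
    refine hΨcont.comp ((continuous_id.add continuous_const).continuousOn) ?_
    intro x hx
    constructor
    · simp; linarith [hx.1, hτ0.le]
    · simp; linarith [hx.2, hLτ]
  have hsum2 : ∑ j ∈ Finset.range (n-1), (∫ t in (a j)..(a (j+1)), (Ψ (t+τ) - Ψ t))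
      = ∫ t in (0:ℝ)..L, (Ψ (t+τ) - Ψ t) := by
    have hint : ∀ k : ℕ, k < n-1 → IntervalIntegrable (fun t => Ψ (t+τ) - Ψ t)
        volume (a k) (a (k+1)) := by
      intro k hk
      obtain ⟨h0, h1, h2, h3⟩ := hbounds2 k hk
      have hsubL : Set.Icc (a k) (a (k+1)) ⊆ Set.Icc 0 L := by
        refine Set.Icc_subset_Icc h0 ?_
        have : a (k+1) + τ ≤ T := by
          have hstep2 : a (k+1) + τ = a (k+2) := by simp only [ha_def]; push_cast; ring
          rw [hstep2]; exact h3
        linarith [hLτ]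
      exact ((hΨdiffc0.mono hsubL).mono (by rw [uIcc_of_le h1])).intervalIntegrable
    have := intervalIntegral.sum_integral_adjacent_intervals (μ := volume) (a := a)
      (f := fun t => Ψ (t+τ) - Ψ t) (n := n-1) hint
    rw [this]
    have e0 : a 0 = 0 := by simp [ha_def]
    have en : a (n-1) = L := by simp only [ha_def, hL_def]
    rw [e0, en]
  have hshift := shift_bound τ L hτ0 hτL Ψ (by rw [hLτ]; exact hΨcont)
    (fun x y hx hxy hy => hΨmono x y hx hxy (by rw [← hLτ]; exact hy))
    (le_of_eq hΨ0.symm)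
  -- total interior sum bound
  have hSsum2 : (∑ k ∈ Finset.Icc 1 (n-1),
        τ * ((s (((k:ℝ)+1)*τ) - 2*s ((k:ℝ)*τ) + s (((k:ℝ)-1)*τ))/τ^2)^2)
      ≤ Ψ T := by
    rw [← Finset.Ico_add_one_right_eq_Icc, Finset.sum_Ico_eq_sum_range]
    simp only [Nat.add_sub_cancel]
    have hstep : ∀ j ∈ Finset.range (n-1),
        τ * ((s ((((1+j : ℕ):ℝ)+1)*τ) - 2*s (((1+j : ℕ):ℝ)*τ)
          + s ((((1+j : ℕ):ℝ)-1)*τ))/τ^2)^2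
        ≤ (1/τ) * ∫ t in (a j)..(a (j+1)), (Ψ (t+τ) - Ψ t) := by
      intro j hj
      have e1 : (((1+j : ℕ):ℝ)+1)*τ = a (j+2) := by simp only [ha_def]; push_cast; ring
      have e2 : ((1+j : ℕ):ℝ)*τ = a (j+1) := by simp only [ha_def]; push_cast; ring
      have e3 : (((1+j : ℕ):ℝ)-1)*τ = a j := by simp only [ha_def]; push_cast; ring
      rw [e1, e2, e3]
      exact hterm2 j (Finset.mem_range.1 hj)
    calc (∑ j ∈ Finset.range (n-1),
          τ * ((s ((((1+j : ℕ):ℝ)+1)*τ) - 2*s (((1+j : ℕ):ℝ)*τ)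
            + s ((((1+j : ℕ):ℝ)-1)*τ))/τ^2)^2)
        ≤ ∑ j ∈ Finset.range (n-1), (1/τ) * ∫ t in (a j)..(a (j+1)), (Ψ (t+τ) - Ψ t) :=
          Finset.sum_le_sum hstep
      _ = (1/τ) * ∑ j ∈ Finset.range (n-1), ∫ t in (a j)..(a (j+1)), (Ψ (t+τ) - Ψ t) :=
          (Finset.mul_sum _ _ _).symm
      _ = (1/τ) * ∫ t in (0:ℝ)..L, (Ψ (t+τ) - Ψ t) := by rw [hsum2]
      _ ≤ (1/τ) * (τ * Ψ (L+τ)) := by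
          apply mul_le_mul_of_nonneg_left hshift (by positivity)
      _ = Ψ T := by rw [hLτ]; field_simp
  -- final assembly
  have hΨτ : Ψ τ = ∫ t in (0:ℝ)..τ, (s'' t)^2 := rfl
  have hΨTe : Ψ T = ∫ t in (0:ℝ)..T, (s'' t)^2 := rfl
  have hsplit_s : (∫ t in (0:ℝ)..T, ((s t)^2 + (s' t)^2 + (s'' t)^2))
      = (∫ t in (0:ℝ)..T, ((s t)^2 + (s' t)^2)) + ∫ t in (0:ℝ)..T, (s'' t)^2 :=
    intervalIntegral.integral_add hPs hs''sq
  have hsplit_s2 : (∫ t in (0:ℝ)..T, ((s t)^2 + (s' t)^2))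
      = (∫ t in (0:ℝ)..T, (s t)^2) + ∫ t in (0:ℝ)..T, (s' t)^2 :=
    intervalIntegral.integral_add hssq hs'sq
  have hsplit_g : (∫ t in (0:ℝ)..T, ((g t)^2 + (g' t)^2))
      = (∫ t in (0:ℝ)..T, (g t)^2) + ∫ t in (0:ℝ)..T, (g' t)^2 :=
    intervalIntegral.integral_add hgsq hg'sq
  have hρs : τ * (∫ t in (0:ℝ)..T, ((s t)^2 + (s' t)^2)) ≤ τ * ρ^2 :=
    mul_le_mul_of_nonneg_left hsρ hτ0.le
  have hρg : τ * (∫ t in (0:ℝ)..T, ((g t)^2 + (g' t)^2)) ≤ τ * ρ^2 :=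
    mul_le_mul_of_nonneg_left hgρ hτ0.le
  have hmax1 : (∫ t in (0:ℝ)..T, ((s t)^2 + (s' t)^2 + (s'' t)^2))
      ≤ max (∫ t in (0:ℝ)..T, ((s t)^2 + (s' t)^2 + (s'' t)^2))
          (∫ t in (0:ℝ)..T, ((g t)^2 + (g' t)^2)) := le_max_left _ _
  have hmax2 : (∫ t in (0:ℝ)..T, ((g t)^2 + (g' t)^2))
      ≤ max (∫ t in (0:ℝ)..T, ((s t)^2 + (s' t)^2 + (s'' t)^2))
          (∫ t in (0:ℝ)..T, ((g t)^2 + (g' t)^2)) := le_max_right _ _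
  apply max_le
  · rw [← hΨτ]
    linarith [Ss0, Ss1, hterm0, hSsum2, hρs, hsplit_s, hsplit_s2, hmax1, hΨTe]
  · rw [← hΨτ]
    linarith [Sg0, Sg1, hρg, hsplit_g, hmax2, hΨτnn]
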